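/- Let M₁ be a positive integer, let m, n be integers with 0 ≤ n ≤ m ≤ M₁, set ℓ_m = min(M₁ − m, n), and let z_1, …, z_{M₁} ∈ ℂ. Then Σ_{i=1}^{M₁} z_i² · e_{M₁−m−1}(z_1,…,ẑ_i,…,z_{M₁}) · e_{M₁−n−1}(z_1,…,ẑ_i,…,z_{M₁}) = (M₁ − m) · e_{M₁−m}(z_1,…,z_{M₁}) · e_{M₁−n}(z_1,…,z_{M₁}) − Σ_{ℓ=1}^{ℓ_m} (m − n + 2ℓ) · e_{M₁−m−ℓ}(z_1,…,z_{M₁}) · e_{M₁−n+ℓ}(z_1,…,z_{M₁}), where ẑ_i indicates that the variable z_i is omitted. -/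

import Mathlib

open Finset

/-- The elementary symmetric polynomial of degree `q ∈ ℤ` in the variables `z i`, `i ∈ s`,
with the convention that it vanishes for `q < 0` (and also for `q > #s`, since then
there are no subsets of cardinality `q`). -/
noncomputable def esymmZ {M : ℕ} (s : Finset (Fin M)) (z : Fin M → ℂ) (q : ℤ) : ℂ :=
  if q < 0 then 0 else ∑ S ∈ s.powersetCard q.toNat, ∏ i ∈ S, z i

section Aux

variable {M₁ : ℕ} (z : Fin M₁ → ℂ)

lemma esymmZ_of_neg {s : Finset (Fin M₁)} {q : ℤ} (h : q < 0) : esymmZ s z q = 0 := by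
  simp [esymmZ, h]

lemma esymmZ_of_gt {s : Finset (Fin M₁)} {q : ℤ} (h : (s.card : ℤ) < q) :
    esymmZ s z q = 0 := by
  have h0 : ¬ q < 0 := by omega
  have : s.card < q.toNat := by omega
  simp [esymmZ, h0, powersetCard_eq_empty.2 this]

lemma esymmZ_split (i : Fin M₁) (q : ℤ) :
    esymmZ univ z q = esymmZ (univ.erase i) z q + z i * esymmZ (univ.erase i) z (q - 1) := by
  rcases lt_trichotomy q 0 with h | h | h
  · rw [esymmZ_of_neg z h, esymmZ_of_neg z h, esymmZ_of_neg z (by omega), mul_zero, add_zero]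
  · subst h
    rw [esymmZ_of_neg z (by norm_num : (0:ℤ) - 1 < 0), mul_zero, add_zero]
    simp [esymmZ]
  · obtain ⟨k, hk⟩ : ∃ k : ℕ, q.toNat = k + 1 := ⟨q.toNat - 1, by omega⟩
    have h1 : ¬ q < 0 := by omega
    have h2 : ¬ q - 1 < 0 := by omega
    have h3 : (q - 1).toNat = k := by omega
    rw [esymmZ, esymmZ, esymmZ, if_neg h1, if_neg h1, if_neg h2, hk, h3]
    have hins : (univ : Finset (Fin M₁)) = insert i (univ.erase i) := by
      rw [insert_erase (mem_univ i)]
    have key : powersetCard (k+1) (univ : Finset (Fin M₁)) =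
        powersetCard (k+1) (univ.erase i) ∪ (powersetCard k (univ.erase i)).image (insert i) := by
      conv_lhs => rw [hins]
      exact powersetCard_succ_insert (notMem_erase i univ) k
    rw [key, sum_union]
    · congr 1
      rw [sum_image]
      · rw [mul_sum]
        refine sum_congr rfl fun S hS => ?_
        rw [prod_insert fun hc => (notMem_erase i univ) ((mem_powersetCard.1 hS).1 hc)]
      · intro a ha b hb hab
        have hia : i ∉ a := fun hc => (notMem_erase i univ) ((mem_powersetCard.1 ha).1 hc)
        have hib : i ∉ b := fun hc => (notMem_erase i univ) ((mem_powersetCard.1 hb).1 hc)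
        rwa [insert_erase_invOn.2.injOn.eq_iff] at hab <;> simp [hia, hib]
    · rw [disjoint_right]
      intro S hS hS'
      obtain ⟨T, hT, rfl⟩ := mem_image.1 hS
      exact (notMem_erase i univ) ((mem_powersetCard.1 hS').1 (mem_insert_self i T))

lemma sum_esymmZ_erase (q : ℤ) :
    ∑ i : Fin M₁, esymmZ (univ.erase i) z q = ((M₁ : ℂ) - q) * esymmZ univ z q := by
  by_cases h0 : q < 0
  · simp [esymmZ_of_neg z h0]
  by_cases h1 : (M₁ : ℤ) < q
  · have : ∀ i : Fin M₁, esymmZ (univ.erase i) z q = 0 := fun i =>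
      esymmZ_of_gt z (by rw [card_erase_of_mem (mem_univ i), card_univ, Fintype.card_fin]; omega)
    simp [this, esymmZ_of_gt z (by rwa [card_univ, Fintype.card_fin])]
  push_neg at h0 h1
  set k := q.toNat with hk
  have hkM : k ≤ M₁ := by omega
  have hfil : ∀ i : Fin M₁, (univ.erase i).powersetCard k
      = (univ.powersetCard k).filter (fun S => i ∉ S) := by
    intro i
    ext S
    simp only [mem_powersetCard, mem_filter, subset_erase, subset_univ, true_and]
    tauto
  simp only [esymmZ, if_neg (not_lt.2 h0), ← hk, hfil]
  simp only [sum_filter]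
  rw [sum_comm]
  rw [mul_sum]
  refine sum_congr rfl fun S hS => ?_
  have hcard : S.card = k := (mem_powersetCard.1 hS).2
  have hfs : (univ.filter (fun i => i ∉ S)) = Sᶜ := by ext j; simp
  rw [← sum_filter, hfs, sum_const, card_compl, Fintype.card_fin, hcard, nsmul_eq_mul]
  congr 1
  have : (k : ℤ) = q := by omega
  push_cast [Nat.cast_sub hkM]
  rw [← this]
  push_cast
  ring

/-- `S(p,q) = ∑ i, z i * e_p^{(i)} * e_q^{(i)}`. -/
noncomputable def sZ (p q : ℤ) : ℂ :=
  ∑ i : Fin M₁, z i * esymmZ (univ.erase i) z p * esymmZ (univ.erase i) z q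

lemma sZ_comm (p q : ℤ) : sZ z p q = sZ z q p :=
  sum_congr rfl fun i _ => by ring

lemma sZ_of_neg {p : ℤ} (q : ℤ) (h : p < 0) : sZ z p q = 0 := by
  simp [sZ, esymmZ_of_neg z h]

/-- `T(u,v) = ∑ i, e_u^{(i)} * e_v^{(i)} = (M₁ - v) e_u e_v - S(u-1, v)`. -/
lemma tZ_eq (u v : ℤ) :
    ∑ i : Fin M₁, esymmZ (univ.erase i) z u * esymmZ (univ.erase i) z v
      = ((M₁ : ℂ) - v) * esymmZ univ z u * esymmZ univ z v - sZ z (u - 1) v := by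
  have h : ∀ i : Fin M₁, esymmZ (univ.erase i) z u * esymmZ (univ.erase i) z v
      = esymmZ univ z u * esymmZ (univ.erase i) z v
        - z i * esymmZ (univ.erase i) z (u - 1) * esymmZ (univ.erase i) z v := by
    intro i
    rw [esymmZ_split z i u]; ring
  rw [sum_congr rfl fun i _ => h i, sum_sub_distrib, ← mul_sum, sum_esymmZ_erase z v, ← sZ]
  ring

lemma sZ_rec (p q : ℤ) :
    sZ z p q = ((p : ℂ) + 1 - q) * esymmZ univ z (p + 1) * esymmZ univ z q
      + sZ z (q - 1) (p + 1) := by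
  have h : ∀ i : Fin M₁, z i * esymmZ (univ.erase i) z p * esymmZ (univ.erase i) z q
      = esymmZ univ z (p + 1) * esymmZ (univ.erase i) z q
        - esymmZ (univ.erase i) z (p + 1) * esymmZ (univ.erase i) z q := by
    intro i
    have := esymmZ_split z i (p + 1)
    rw [show p + 1 - 1 = p by ring] at this
    rw [this]; ring
  rw [sZ, sum_congr rfl fun i _ => h i, sum_sub_distrib, ← mul_sum, sum_esymmZ_erase z q]
  have h2 : ∑ i : Fin M₁, esymmZ (univ.erase i) z (p + 1) * esymmZ (univ.erase i) z q
      = ∑ i : Fin M₁, esymmZ (univ.erase i) z q * esymmZ (univ.erase i) z (p + 1) :=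
    sum_congr rfl fun i _ => mul_comm _ _
  rw [h2, tZ_eq]
  push_cast
  ring

lemma sZ_closed : ∀ (a : ℕ) (b : ℤ), sZ z ((a : ℤ) - 1) b
    = ∑ j ∈ range a, ((b : ℂ) - a + 2 * (j + 1)) * esymmZ univ z ((a : ℤ) - (j + 1))
        * esymmZ univ z (b + (j + 1)) := by
  intro a
  induction a with
  | zero =>
    intro b
    rw [show ((0:ℕ):ℤ) - 1 = -1 by norm_num, sZ_of_neg z b (by norm_num)]
    simp
  | succ a ih =>
    intro b
    have h1 : ((a + 1 : ℕ) : ℤ) - 1 = (a : ℤ) := by push_cast; ring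
    rw [h1, sZ_comm, sZ_rec]
    rw [ih (b + 1)]
    rw [sum_range_succ' (fun j : ℕ => ((b : ℂ) - ((a+1:ℕ) : ℂ) + 2 * ((j:ℂ) + 1))
        * esymmZ univ z (((a+1:ℕ) : ℤ) - ((j:ℤ) + 1))
        * esymmZ univ z (b + ((j:ℤ) + 1))) a]
    conv_lhs => rw [add_comm]
    congr 1
    · refine sum_congr rfl fun j hj => ?_
      have e1 : (((a+1:ℕ)) : ℤ) - (((j+1:ℕ) : ℤ) + 1) = (a : ℤ) - ((j:ℤ) + 1) := by
        push_cast; ring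
      have e2 : b + (((j+1:ℕ) : ℤ) + 1) = b + 1 + ((j:ℤ) + 1) := by push_cast; ring
      rw [e1, e2]
      push_cast
      ring
    · have e1 : (((a+1:ℕ)) : ℤ) - (((0:ℕ) : ℤ) + 1) = (a : ℤ) := by push_cast; ring
      have e2 : b + (((0:ℕ) : ℤ) + 1) = b + 1 := by push_cast; ring
      rw [e1, e2]
      push_cast
      ring

end Aux

theorem stmt5 (M₁ : ℕ) (hM₁ : 0 < M₁) (m n : ℕ) (hnm : n ≤ m) (hm : m ≤ M₁)
    (z : Fin M₁ → ℂ) :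
    ∑ i : Fin M₁, z i ^ 2 * esymmZ (univ.erase i) z ((M₁ : ℤ) - m - 1) *
        esymmZ (univ.erase i) z ((M₁ : ℤ) - n - 1)
    = ((M₁ : ℂ) - m) * esymmZ univ z ((M₁ : ℤ) - m) * esymmZ univ z ((M₁ : ℤ) - n)
      - ∑ ℓ ∈ Finset.Icc 1 (min (M₁ - m) n),
          ((m : ℂ) - n + 2 * ℓ) * esymmZ univ z ((M₁ : ℤ) - m - ℓ) *
            esymmZ univ z ((M₁ : ℤ) - n + ℓ) := by
  set A : ℕ := M₁ - m with hA
  set B : ℕ := M₁ - n with hB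
  have hAZ : (M₁ : ℤ) - m = (A : ℤ) := by omega
  have hBZ : (M₁ : ℤ) - n = (B : ℤ) := by omega
  have hAC : (M₁ : ℂ) - m = (A : ℂ) := by
    have : ((M₁ : ℤ) : ℂ) - ((m : ℤ) : ℂ) = ((A : ℤ) : ℂ) := by rw [← Int.cast_sub, hAZ]
    push_cast at this; exact_mod_cast this
  have hmnC : (m : ℂ) - n = (B : ℂ) - A := by
    have h : (m : ℤ) - n = (B : ℤ) - A := by omega
    have : ((m : ℤ) : ℂ) - ((n : ℤ) : ℂ) = ((B : ℤ) : ℂ) - ((A : ℤ) : ℂ) := by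
      rw [← Int.cast_sub, ← Int.cast_sub, h]
    push_cast at this; exact this
  -- Step 1: rewrite the left-hand side
  have step1 : ∑ i : Fin M₁, z i ^ 2 * esymmZ (univ.erase i) z ((M₁ : ℤ) - m - 1) *
        esymmZ (univ.erase i) z ((M₁ : ℤ) - n - 1)
      = (A : ℂ) * esymmZ univ z (A : ℤ) * esymmZ univ z (B : ℤ) - sZ z ((A : ℤ) - 1) (B : ℤ) := by
    have hL : ∀ i : Fin M₁, z i ^ 2 * esymmZ (univ.erase i) z ((M₁ : ℤ) - m - 1) *
          esymmZ (univ.erase i) z ((M₁ : ℤ) - n - 1)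
        = (esymmZ univ z (A : ℤ) - esymmZ (univ.erase i) z (A : ℤ))
          * (esymmZ univ z (B : ℤ) - esymmZ (univ.erase i) z (B : ℤ)) := by
      intro i
      have h1 := esymmZ_split z i (A : ℤ)
      have h2 := esymmZ_split z i (B : ℤ)
      rw [show (M₁ : ℤ) - m - 1 = (A : ℤ) - 1 by omega,
        show (M₁ : ℤ) - n - 1 = (B : ℤ) - 1 by omega, h1, h2]
      ring
    rw [sum_congr rfl fun i _ => hL i]
    have expand : ∑ i : Fin M₁,
        (esymmZ univ z (A : ℤ) - esymmZ (univ.erase i) z (A : ℤ))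
          * (esymmZ univ z (B : ℤ) - esymmZ (univ.erase i) z (B : ℤ))
        = (∑ _i : Fin M₁, esymmZ univ z (A : ℤ) * esymmZ univ z (B : ℤ))
          - esymmZ univ z (A : ℤ) * (∑ i : Fin M₁, esymmZ (univ.erase i) z (B : ℤ))
          - esymmZ univ z (B : ℤ) * (∑ i : Fin M₁, esymmZ (univ.erase i) z (A : ℤ))
          + ∑ i : Fin M₁, esymmZ (univ.erase i) z (A : ℤ) * esymmZ (univ.erase i) z (B : ℤ) := by
      rw [mul_sum, mul_sum, ← sum_sub_distrib, ← sum_sub_distrib, ← sum_add_distrib]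
      exact sum_congr rfl fun i _ => by ring
    rw [expand, sum_esymmZ_erase, sum_esymmZ_erase, tZ_eq, sum_const, card_univ,
      Fintype.card_fin, nsmul_eq_mul]
    push_cast
    ring
  rw [step1, hAZ, hBZ, hAC]
  -- Step 2: identify the subtracted sum with `sZ`
  have step2 : ∑ ℓ ∈ Finset.Icc 1 (min A n),
        ((m : ℂ) - n + 2 * ℓ) * esymmZ univ z ((A : ℤ) - ℓ) *
          esymmZ univ z ((B : ℤ) + ℓ)
      = sZ z ((A : ℤ) - 1) (B : ℤ) := by
    rw [sZ_closed z A (B : ℤ)]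
    have hmin : min A n ≤ A := min_le_left _ _
    -- restrict the range-A sum to range (min A n)
    have hrestrict : ∑ j ∈ range A,
          (((B : ℤ) : ℂ) - A + 2 * (j + 1)) * esymmZ univ z ((A : ℤ) - (j + 1))
            * esymmZ univ z ((B : ℤ) + (j + 1))
        = ∑ j ∈ range (min A n),
          (((B : ℤ) : ℂ) - A + 2 * (j + 1)) * esymmZ univ z ((A : ℤ) - (j + 1))
            * esymmZ univ z ((B : ℤ) + (j + 1)) := by
      refine (sum_subset (by simp [hmin]) ?_).symm
      intro j hjA hj
      have hj1 : min A n ≤ j := Nat.le_of_not_lt (fun hc => hj (mem_range.2 hc))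
      have hjA' : j < A := mem_range.1 hjA
      have hn : n ≤ j := by
        by_contra hc
        push_neg at hc
        exact (not_lt.2 hj1) (lt_min hjA' hc)
      have : ((univ : Finset (Fin M₁)).card : ℤ) < (B : ℤ) + (j + 1) := by
        rw [card_univ, Fintype.card_fin]; omega
      rw [esymmZ_of_gt z this, mul_zero]
    rw [hrestrict, ← Finset.Ico_add_one_right_eq_Icc, sum_Ico_eq_sum_range, Nat.add_sub_cancel]
    refine sum_congr rfl fun j hj => ?_
    have e1 : (A : ℤ) - ((1 + j : ℕ) : ℤ) = (A : ℤ) - ((j : ℤ) + 1) := by push_cast; omega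
    have e2 : (B : ℤ) + ((1 + j : ℕ) : ℤ) = (B : ℤ) + ((j : ℤ) + 1) := by push_cast; omega
    rw [e1, e2, hmnC]
    push_cast
    ring
  rw [step2]
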